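/- arXiv:0807.2679 — 3 statements merged into one kernel-verified Lean document; each statement's English description precedes it below -/
import Mathlib

section
/- Let g ≥ 1 be an integer and let 𝐍 = (N_0,…,N_{g−1}) be a vector of positive integers with W = N_0+⋯+N_{g−1} − g. Then the following identity holds in ℤ[t, t^{−1}]: ∏_{k=0}^{g−1} ( ∑_{j=0}^{N_k−1} t^{N_k−1−2j} ) = ∑_{u=⌈W/2⌉}^{W} ( T(𝐍,u) − T(𝐍,u+1) ) · ( ∑_{i=0}^{2u−W} t^{2u−W−2i} ). (This is the paper's expansion of the complete homogeneous specialization h_{𝐍−1}(t,t^{−1}) into two-variable Schur functions s_μ(t,t^{−1}) = (t^{μ_1+1−μ_2} − t^{−(μ_1+1−μ_2)})/(t − t^{−1}), with coefficients given by differences of generalized trinomial coefficients.) -/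
open LaurentPolynomial

/-- The generalized trinomial coefficient `T(𝐍,u)`: the coefficient of `x^u` in
`∏_{k<g} (1 + x + ⋯ + x^{N k - 1})`. -/
noncomputable def trinomialCoeff (g : ℕ) (N : Fin g → ℕ) (u : ℕ) : ℕ :=
  (∏ k : Fin g, ∑ j ∈ Finset.range (N k), (Polynomial.X : Polynomial ℕ) ^ j).coeff u

section Aux

open Polynomial Finset

/-- The integer version of the generating polynomial. -/
noncomputable def CHSEpoly (g : ℕ) (N : Fin g → ℕ) : Polynomial ℤ :=
  ∏ k : Fin g, ∑ j ∈ Finset.range (N k), (Polynomial.X : Polynomial ℤ) ^ j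

lemma CHSE_coeff_cast (g : ℕ) (N : Fin g → ℕ) (u : ℕ) :
    ((trinomialCoeff g N u : ℤ)) = (CHSEpoly g N).coeff u := by
  have : (CHSEpoly g N) =
      ((∏ k : Fin g, ∑ j ∈ Finset.range (N k), (Polynomial.X : Polynomial ℕ) ^ j).map
        (Nat.castRingHom ℤ)) := by
    rw [Polynomial.map_prod]
    refine Finset.prod_congr rfl fun k _ => ?_
    rw [Polynomial.map_sum]
    simp
  rw [this, Polynomial.coeff_map, trinomialCoeff]
  simp

lemma CHSE_geom_coeff (n m : ℕ) :
    (∑ i ∈ Finset.range n, (Polynomial.X : Polynomial ℤ) ^ i).coeff m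
      = if m < n then 1 else 0 := by
  rw [Polynomial.finset_sum_coeff]
  simp only [Polynomial.coeff_X_pow]
  rw [Finset.sum_ite_eq (Finset.range n) m (fun _ => (1 : ℤ))]
  simp

lemma CHSE_geom_natDegree (n : ℕ) (hn : 1 ≤ n) :
    (∑ i ∈ Finset.range n, (Polynomial.X : Polynomial ℤ) ^ i).natDegree = n - 1 := by
  apply le_antisymm
  · rw [Polynomial.natDegree_le_iff_coeff_eq_zero]
    intro m hm
    rw [CHSE_geom_coeff]
    simp only [ite_eq_right_iff]
    omega
  · apply Polynomial.le_natDegree_of_ne_zero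
    rw [CHSE_geom_coeff, if_pos (by omega)]
    norm_num

lemma CHSE_geom_reverse (n : ℕ) (hn : 1 ≤ n) :
    (∑ i ∈ Finset.range n, (Polynomial.X : Polynomial ℤ) ^ i).reverse
      = ∑ i ∈ Finset.range n, (Polynomial.X : Polynomial ℤ) ^ i := by
  set f := ∑ i ∈ Finset.range n, (Polynomial.X : Polynomial ℤ) ^ i with hf
  ext m
  by_cases hm : m ≤ n - 1
  · rw [Polynomial.coeff_reverse, CHSE_geom_natDegree n hn, Polynomial.revAt_le hm,
      CHSE_geom_coeff, CHSE_geom_coeff]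
    congr 1
    simp only [eq_iff_iff]
    omega
  · have h1 : f.reverse.coeff m = 0 := by
      apply Polynomial.coeff_eq_zero_of_natDegree_lt
      calc f.reverse.natDegree ≤ f.natDegree := Polynomial.reverse_natDegree_le f
        _ = n - 1 := CHSE_geom_natDegree n hn
        _ < m := by omega
    have h2 : f.coeff m = 0 := by
      rw [hf, CHSE_geom_coeff]
      simp only [ite_eq_right_iff]; omega
    rw [h1, h2]

lemma CHSE_reverse_prod {ι : Type*} (s : Finset ι) (f : ι → Polynomial ℤ) :
    (∏ i ∈ s, f i).reverse = ∏ i ∈ s, (f i).reverse := by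
  induction s using Finset.cons_induction with
  | empty => simp [Polynomial.reverse]
  | cons a s ha ih =>
    rw [Finset.prod_cons, Finset.prod_cons, Polynomial.reverse_mul_of_domain, ih]

lemma CHSE_monic (g : ℕ) (N : Fin g → ℕ) (hN : ∀ k, 1 ≤ N k) : (CHSEpoly g N).Monic := by
  apply Polynomial.monic_prod_of_monic
  intro k _
  exact Polynomial.monic_geom_sum_X (by have := hN k; omega)

lemma CHSE_natDegree (g : ℕ) (N : Fin g → ℕ) (hN : ∀ k, 1 ≤ N k) :
    (CHSEpoly g N).natDegree = ∑ k, (N k - 1) := by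
  rw [CHSEpoly, Polynomial.natDegree_prod_of_monic]
  · exact Finset.sum_congr rfl fun k _ => CHSE_geom_natDegree _ (hN k)
  · intro k _
    exact Polynomial.monic_geom_sum_X (by have := hN k; omega)

lemma CHSE_symm (g : ℕ) (N : Fin g → ℕ) (hN : ∀ k, 1 ≤ N k) (W : ℕ)
    (hWd : W = ∑ k, (N k - 1)) (v : ℕ) (hv : v ≤ W) :
    (CHSEpoly g N).coeff (W - v) = (CHSEpoly g N).coeff v := by
  have hrev : (CHSEpoly g N).reverse = CHSEpoly g N := by
    rw [CHSEpoly, CHSE_reverse_prod]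
    exact Finset.prod_congr rfl fun k _ => CHSE_geom_reverse _ (hN k)
  conv_rhs => rw [← hrev]
  rw [Polynomial.coeff_reverse, CHSE_natDegree g N hN, ← hWd, Polynomial.revAt_le hv]

lemma CHSE_vanish (g : ℕ) (N : Fin g → ℕ) (hN : ∀ k, 1 ≤ N k) (W : ℕ)
    (hWd : W = ∑ k, (N k - 1)) (u : ℕ) (hu : W < u) : (CHSEpoly g N).coeff u = 0 := by
  apply Polynomial.coeff_eq_zero_of_natDegree_lt
  rw [CHSE_natDegree g N hN, ← hWd]; exact hu

lemma CHSE_T_sum {ι : Type*} (s : Finset ι) (f : ι → ℤ) :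
    (T (∑ i ∈ s, f i) : LaurentPolynomial ℤ) = ∏ i ∈ s, T (f i) := by
  induction s using Finset.cons_induction with
  | empty => simp
  | cons a s ha ih => rw [Finset.sum_cons, Finset.prod_cons, T_add, ih]

/-- Telescoping. -/
lemma CHSE_telescope (f : ℕ → ℤ) (a W : ℕ) (ha : a ≤ W + 1) :
    ∑ u ∈ Finset.Icc a W, (f u - f (u + 1)) = f a - f (W + 1) := by
  rw [← Finset.Ico_add_one_right_eq_Icc, Finset.sum_Ico_eq_sum_range]
  have := Finset.sum_range_sub' (fun i => f (a + i)) (W + 1 - a)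
  simp only [add_zero] at this
  calc ∑ i ∈ Finset.range (W + 1 - a), (f (a + i) - f (a + i + 1))
      = ∑ i ∈ Finset.range (W + 1 - a), ((fun i => f (a + i)) i - (fun i => f (a + i)) (i + 1)) := by
        refine Finset.sum_congr rfl fun i _ => ?_
        simp only [← add_assoc]
    _ = f (a + 0) - f (a + (W + 1 - a)) := Finset.sum_range_sub' _ _
    _ = f a - f (W + 1) := by congr 2 <;> omega

end Aux

/-- In `ℤ[t,t⁻¹]`, with `W = ∑ N k - g`:
`∏_{k<g} (∑_{j<N k} t^{N k - 1 - 2j})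
  = ∑_{u=⌈W/2⌉}^{W} (T(𝐍,u) - T(𝐍,u+1)) · (∑_{i=0}^{2u-W} t^{2u-W-2i})`. -/
theorem complete_homogeneous_schur_expansion
    (g : ℕ) (hg : 1 ≤ g) (N : Fin g → ℕ) (hN : ∀ k, 1 ≤ N k)
    (W : ℕ) (hW : W = ∑ k, N k - g) :
    (∏ k : Fin g, ∑ j ∈ Finset.range (N k),
        (T ((N k : ℤ) - 1 - 2 * (j : ℤ)) : LaurentPolynomial ℤ)) =
      ∑ u ∈ Finset.Icc ((W + 1) / 2) W,
        LaurentPolynomial.C ((trinomialCoeff g N u : ℤ) - (trinomialCoeff g N (u + 1) : ℤ)) *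
          ∑ i ∈ Finset.range (2 * u - W + 1),
            T ((2 * (u : ℤ) - (W : ℤ)) - 2 * (i : ℤ)) := by
  classical
  -- basic facts about W
  have hWd : W = ∑ k, (N k - 1) := by
    rw [hW, Finset.sum_tsub_distrib _ (fun k _ => hN k)]
    simp
  set c : ℕ → ℤ := fun u => (CHSEpoly g N).coeff u with hc
  have hcast : ∀ u, (trinomialCoeff g N u : ℤ) = c u := fun u => CHSE_coeff_cast g N u
  -- step 1: LHS = ∑_{u ∈ range (W+1)} C (c u) * T (2u - W)
  have hWint : ((W : ℤ)) = ∑ k, ((N k : ℤ) - 1) := by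
    rw [hWd]
    push_cast [Nat.cast_sub (hN _)]
    rfl
  have lhs_eq : (∏ k : Fin g, ∑ j ∈ Finset.range (N k),
        (T ((N k : ℤ) - 1 - 2 * (j : ℤ)) : LaurentPolynomial ℤ))
      = ∑ u ∈ Finset.range (W + 1), LaurentPolynomial.C (c u) * T (2 * (u : ℤ) - W) := by
    have factor : ∀ k : Fin g,
        (∑ j ∈ Finset.range (N k), (T ((N k : ℤ) - 1 - 2 * (j : ℤ)) : LaurentPolynomial ℤ))
          = T (-((N k : ℤ) - 1)) * ∑ j ∈ Finset.range (N k), (T 2 : LaurentPolynomial ℤ) ^ j := by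
      intro k
      have refl := Finset.sum_range_reflect
        (fun j : ℕ => (T (2 * (j : ℤ) - ((N k : ℤ) - 1)) : LaurentPolynomial ℤ)) (N k)
      have : (∑ j ∈ Finset.range (N k), (T ((N k : ℤ) - 1 - 2 * (j : ℤ)) : LaurentPolynomial ℤ))
          = ∑ j ∈ Finset.range (N k),
              (T (2 * (j : ℤ) - ((N k : ℤ) - 1)) : LaurentPolynomial ℤ) := by
        rw [← refl]
        refine Finset.sum_congr rfl fun j hj => ?_
        have hj' : j < N k := Finset.mem_range.mp hj
        congr 1
        have : ((N k - 1 - j : ℕ) : ℤ) = (N k : ℤ) - 1 - j := by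
          have := hN k; omega
        rw [this]; ring
      rw [this, Finset.mul_sum]
      refine Finset.sum_congr rfl fun j _ => ?_
      rw [T_pow, ← T_add]
      congr 1; ring
    calc (∏ k : Fin g, ∑ j ∈ Finset.range (N k),
          (T ((N k : ℤ) - 1 - 2 * (j : ℤ)) : LaurentPolynomial ℤ))
        = ∏ k : Fin g, (T (-((N k : ℤ) - 1)) *
            ∑ j ∈ Finset.range (N k), (T 2 : LaurentPolynomial ℤ) ^ j) := by
          exact Finset.prod_congr rfl fun k _ => factor k
      _ = (∏ k : Fin g, (T (-((N k : ℤ) - 1)) : LaurentPolynomial ℤ)) *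
            ∏ k : Fin g, ∑ j ∈ Finset.range (N k), (T 2 : LaurentPolynomial ℤ) ^ j := by
          rw [Finset.prod_mul_distrib]
      _ = T (-(W : ℤ)) *
            Polynomial.eval₂ (LaurentPolynomial.C) (T 2) (CHSEpoly g N) := by
          congr 1
          · rw [← CHSE_T_sum]
            congr 1
            rw [hWint, ← Finset.sum_neg_distrib]
          · rw [CHSEpoly, Polynomial.eval₂_finset_prod]
            refine Finset.prod_congr rfl fun k _ => ?_
            rw [Polynomial.eval₂_finset_sum]
            simp
      _ = ∑ u ∈ Finset.range (W + 1), LaurentPolynomial.C (c u) * T (2 * (u : ℤ) - W) := by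
          rw [Polynomial.eval₂_eq_sum_range' (LaurentPolynomial.C)
            (n := W + 1) (by rw [CHSE_natDegree g N hN, ← hWd]; omega) (T 2)]
          rw [Finset.mul_sum]
          refine Finset.sum_congr rfl fun u _ => ?_
          rw [T_pow]
          rw [mul_comm ((LaurentPolynomial.C : ℤ →+* _) ((CHSEpoly g N).coeff u)) (T (u * 2)),
            ← mul_assoc, ← T_add, mul_comm (T _)]
          congr 2
          ring
  rw [lhs_eq]
  -- step 2: rewrite the RHS inner sum as a sum over Icc (W-u) u
  have inner_eq : ∀ u ∈ Finset.Icc ((W + 1) / 2) W,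
      (∑ i ∈ Finset.range (2 * u - W + 1),
          (T ((2 * (u : ℤ) - (W : ℤ)) - 2 * (i : ℤ)) : LaurentPolynomial ℤ))
        = ∑ v ∈ Finset.Icc (W - u) u, T (2 * (v : ℤ) - W) := by
    intro u hu
    rw [Finset.mem_Icc] at hu
    refine Finset.sum_nbij' (fun i => u - i) (fun v => u - v) ?_ ?_ ?_ ?_ ?_
    · intro i hi
      simp only [Finset.mem_range] at hi
      simp only [Finset.mem_Icc]
      omega
    · intro v hv
      simp only [Finset.mem_Icc] at hv
      simp only [Finset.mem_range]
      omega
    · intro i hi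
      simp only [Finset.mem_range] at hi
      omega
    · intro v hv
      simp only [Finset.mem_Icc] at hv
      omega
    · intro i hi
      simp only [Finset.mem_range] at hi
      congr 1
      omega
  have step2 : (∑ u ∈ Finset.Icc ((W + 1) / 2) W,
        LaurentPolynomial.C ((trinomialCoeff g N u : ℤ) - (trinomialCoeff g N (u + 1) : ℤ)) *
          ∑ i ∈ Finset.range (2 * u - W + 1),
            (T ((2 * (u : ℤ) - (W : ℤ)) - 2 * (i : ℤ)) : LaurentPolynomial ℤ))
      = ∑ u ∈ Finset.Icc ((W + 1) / 2) W,
        LaurentPolynomial.C ((trinomialCoeff g N u : ℤ) - (trinomialCoeff g N (u + 1) : ℤ)) *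
          ∑ v ∈ Finset.Icc (W - u) u, T (2 * (v : ℤ) - W) :=
    Finset.sum_congr rfl fun u hu => by rw [inner_eq u hu]
  rw [step2]
  -- step 3: swap the double sum
  have swap : (∑ u ∈ Finset.Icc ((W + 1) / 2) W,
        LaurentPolynomial.C ((trinomialCoeff g N u : ℤ) - (trinomialCoeff g N (u + 1) : ℤ)) *
          ∑ v ∈ Finset.Icc (W - u) u, (T (2 * (v : ℤ) - W) : LaurentPolynomial ℤ))
      = ∑ v ∈ Finset.range (W + 1), (∑ u ∈ Finset.Icc (max v (W - v)) W,
          LaurentPolynomial.C ((trinomialCoeff g N u : ℤ) - (trinomialCoeff g N (u + 1) : ℤ)))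
            * T (2 * (v : ℤ) - W) := by
    set F : ℕ → ℕ → LaurentPolynomial ℤ := fun u v =>
      LaurentPolynomial.C ((trinomialCoeff g N u : ℤ) - (trinomialCoeff g N (u + 1) : ℤ)) *
        T (2 * (v : ℤ) - W) with hF
    have lhs1 : (∑ u ∈ Finset.Icc ((W + 1) / 2) W,
          LaurentPolynomial.C ((trinomialCoeff g N u : ℤ) - (trinomialCoeff g N (u + 1) : ℤ)) *
            ∑ v ∈ Finset.Icc (W - u) u, (T (2 * (v : ℤ) - W) : LaurentPolynomial ℤ))
        = ∑ u ∈ Finset.range (W + 1), ∑ v ∈ Finset.range (W + 1),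
            if W ≤ u + v ∧ v ≤ u then F u v else 0 := by
      rw [Finset.sum_subset (by intro u hu; simp only [Finset.mem_Icc, Finset.mem_range] at *; omega :
        Finset.Icc ((W + 1) / 2) W ⊆ Finset.range (W + 1))]
      · refine Finset.sum_congr rfl fun u hu => ?_
        rw [Finset.mem_range] at hu
        rw [Finset.mul_sum]
        rw [← Finset.sum_filter]
        have : Finset.filter (fun v => W ≤ u + v ∧ v ≤ u) (Finset.range (W + 1))
            = Finset.Icc (W - u) u := by
          ext v
          simp only [Finset.mem_filter, Finset.mem_range, Finset.mem_Icc]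
          omega
        rw [this]
      · intro u hu hnot
        rw [Finset.mem_range] at hu
        rw [Finset.mem_Icc] at hnot
        have : Finset.Icc (W - u) u = ∅ := Finset.Icc_eq_empty (by omega)
        rw [this, Finset.sum_empty, mul_zero]
    have rhs1 : (∑ v ∈ Finset.range (W + 1), (∑ u ∈ Finset.Icc (max v (W - v)) W,
          LaurentPolynomial.C ((trinomialCoeff g N u : ℤ) - (trinomialCoeff g N (u + 1) : ℤ)))
            * T (2 * (v : ℤ) - W))
        = ∑ v ∈ Finset.range (W + 1), ∑ u ∈ Finset.range (W + 1),
            if W ≤ u + v ∧ v ≤ u then F u v else 0 := by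
      refine Finset.sum_congr rfl fun v hv => ?_
      rw [Finset.mem_range] at hv
      rw [Finset.sum_mul, ← Finset.sum_filter]
      have : Finset.filter (fun u => W ≤ u + v ∧ v ≤ u) (Finset.range (W + 1))
          = Finset.Icc (max v (W - v)) W := by
        ext u
        simp only [Finset.mem_filter, Finset.mem_range, Finset.mem_Icc, max_le_iff]
        omega
      rw [this]
    rw [lhs1, rhs1, Finset.sum_comm]
  rw [swap]
  -- step 4: telescope and symmetry
  refine Finset.sum_congr rfl fun v hv => ?_
  rw [Finset.mem_range] at hv
  congr 1
  rw [← map_sum]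
  congr 1
  have : ∀ u, (trinomialCoeff g N u : ℤ) - (trinomialCoeff g N (u + 1) : ℤ)
      = c u - c (u + 1) := by
    intro u; rw [hcast, hcast]
  rw [Finset.sum_congr rfl fun u _ => this u]
  rw [CHSE_telescope c (max v (W - v)) W (by omega)]
  have hzero : c (W + 1) = 0 := CHSE_vanish g N hN W hWd (W + 1) (by omega)
  rw [hzero, sub_zero]
  rcases le_or_gt (W - v) v with h | h
  · rw [max_eq_left h]
  · rw [max_eq_right (le_of_lt h)]
    exact (CHSE_symm g N hN W hWd v (by omega)).symm
end

section
/- Fix integers c ≥ 1, 1 ≤ i ≤ c, g ≥ 1 and p ≥ 1. Let P be a moderate multi-sequence indexed by c-tuples of positive integers, and let Q be a multi-sequence of Laurent polynomials over ℂ indexed by pairs (𝐍, u) where 𝐍 is a g-tuple of positive integers and u ∈ {0, 1, …, |𝐍| − g}, such that Q is moderate (with bounds polynomial in |𝐍|). Define a multi-sequence R indexed by (c + g − 1)-tuples of positive integers by R_{M_1,…,M_{i−1},𝐍,M_{i+1},…,M_c}(A) = ∑_{u=0}^{|𝐍|−g} Q_{𝐍,u}(A) · sgn((2u − (|𝐍|−g))p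 + 1) · P_{M_1,…,M_{i−1}, |(2u − (|𝐍|−g))p + 1|, M_{i+1},…,M_c}(A). Then R is moderate. (This generalized cabling operation is the operation the paper's cabling formula performs on colored Jones polynomials; closure of moderateness under it shows that all links obtained from the unknot by repeated cabling and connected sum have moderate colored Jones polynomials.) -/
open LaurentPolynomial

/-- A multi-sequence of Laurent polynomials over `ℂ`, indexed by tuples of positive
integers, is *moderate* if there are constants `C, m > 0` such that for every index `𝐍`
the absolute values of the maximal degree, the minimal degree (i.e. of every exponent
carrying a nonzero coefficient) and of all coefficients are less than `C·|𝐍|^m`, where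
`|𝐍|` is the sum of the entries of `𝐍`. -/
def Moderate {ι : Type*} [Fintype ι] (P : (ι → ℕ+) → LaurentPolynomial ℂ) : Prop :=
  ∃ C m : ℝ, 0 < C ∧ 0 < m ∧ ∀ N : ι → ℕ+,
    (∀ j : ℤ, (P N).coeff j ≠ 0 → |(j : ℝ)| < C * (∑ k, ((N k : ℕ) : ℝ)) ^ m) ∧
    (∀ j : ℤ, ‖(P N).coeff j‖ < C * (∑ k, ((N k : ℕ) : ℝ)) ^ m)

/-- The generalized cabling operation: from `P` (indexed by `c`-tuples) and `Q` (indexed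
by pairs `(𝐍,u)` of a `g`-tuple and `0 ≤ u ≤ |𝐍|-g`) form the multi-sequence indexed by
`(c+g-1)`-tuples (the tuple entries other than the `i`-th one, together with `𝐍`)
`R = ∑_{u=0}^{|𝐍|-g} Q_{𝐍,u} · sgn((2u-(|𝐍|-g))p+1) · P_{…,|(2u-(|𝐍|-g))p+1|,…}`,
the color `|(2u-(|𝐍|-g))p+1|` being inserted in the `i`-th slot.  (When the integer
`(2u-(|𝐍|-g))p+1` is zero its sign is zero, so the corresponding term vanishes and the
dummy color `1` used there is irrelevant.) -/
noncomputable def cablingOp (c : ℕ) (i : Fin c) (g p : ℕ)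
    (P : (Fin c → ℕ+) → LaurentPolynomial ℂ)
    (Q : (Fin g → ℕ+) → ℕ → LaurentPolynomial ℂ)
    (K : ({k : Fin c // k ≠ i} ⊕ Fin g) → ℕ+) : LaurentPolynomial ℂ :=
  ∑ u ∈ Finset.range ((∑ k, ((K (Sum.inr k) : ℕ))) - g + 1),
    ((((2 * (u : ℤ) - ((∑ k, (((K (Sum.inr k) : ℕ)) : ℤ)) - g)) * p + 1).sign : ℂ)) •
      (Q (fun k => K (Sum.inr k)) u *
        P (fun k => if h : k = i then
            ⟨max ((2 * (u : ℤ) - ((∑ k', (((K (Sum.inr k') : ℕ)) : ℤ)) - g)) * p + 1).natAbs 1,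
              lt_of_lt_of_le Nat.one_pos (le_max_right _ _)⟩
          else K (Sum.inl ⟨k, h⟩)))


private lemma laurent_support_card_le (f : LaurentPolynomial ℂ) (B : ℝ) (hB : 0 < B)
    (h : ∀ j : ℤ, f.coeff j ≠ 0 → |(j : ℝ)| < B) :
    (f.coeff.support.card : ℝ) ≤ 2 * B + 3 := by
  have hc1 : (0:ℤ) < ⌈B⌉ := Int.ceil_pos.mpr hB
  have hsub : f.coeff.support ⊆ Finset.Icc (-⌈B⌉) ⌈B⌉ := by
    intro j hj
    have hj' := h j (Finsupp.mem_support_iff.mp hj)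
    rw [Finset.mem_Icc, ← abs_le]
    have h2 : ((|j| : ℤ) : ℝ) ≤ (⌈B⌉ : ℝ) := by
      rw [Int.cast_abs]; exact hj'.le.trans (Int.le_ceil B)
    exact_mod_cast h2
  have hcard : (f.coeff.support.card : ℝ) ≤ ((Finset.Icc (-⌈B⌉) ⌈B⌉).card : ℝ) := by
    exact_mod_cast Finset.card_le_card hsub
  have hIcc : ((Finset.Icc (-⌈B⌉) ⌈B⌉).card : ℤ) = ⌈B⌉ + 1 - (-⌈B⌉) :=
    Int.card_Icc_of_le (a := -⌈B⌉) (b := ⌈B⌉) (by omega)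
  have hIccR : ((Finset.Icc (-⌈B⌉) ⌈B⌉).card : ℝ) = 2 * (⌈B⌉ : ℝ) + 1 := by
    have h3 : ((Finset.Icc (-⌈B⌉) ⌈B⌉).card : ℝ) = ((⌈B⌉ + 1 - (-⌈B⌉) : ℤ) : ℝ) := by
      exact_mod_cast hIcc
    rw [h3]; push_cast; ring
  have hceil : (⌈B⌉ : ℝ) ≤ B + 1 := (Int.ceil_lt_add_one B).le
  rw [hIccR] at hcard
  linarith

private lemma laurent_mul_coeff_le (f g : LaurentPolynomial ℂ) (Bf Bg : ℝ)
    (hf : ∀ j : ℤ, ‖f.coeff j‖ ≤ Bf) (hg : ∀ j : ℤ, ‖g.coeff j‖ ≤ Bg)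
    (j : ℤ) : ‖(f * g).coeff j‖ ≤ (f.coeff.support.card : ℝ) * Bf * Bg := by
  have hBf : 0 ≤ Bf := le_trans (norm_nonneg _) (hf 0)
  have hBg : 0 ≤ Bg := le_trans (norm_nonneg _) (hg 0)
  rw [AddMonoidAlgebra.coeff_mul]
  rw [Finsupp.sum]
  refine le_trans (norm_sum_le _ _) ?_
  rw [mul_assoc, ← nsmul_eq_mul]
  refine Finset.sum_le_card_nsmul _ _ _ ?_
  intro x _
  rw [Finsupp.sum]
  have hone : (∑ y ∈ g.coeff.support, if x + y = j then f.coeff x * g.coeff y else 0)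
      = if j - x ∈ g.coeff.support then f.coeff x * g.coeff (j - x) else 0 := by
    rw [← Finset.sum_ite_eq' g.coeff.support (j - x) (fun y => f.coeff x * g.coeff y)]
    refine Finset.sum_congr rfl fun y _ => ?_
    congr 1
    simp only [eq_iff_iff]; omega
  rw [hone]
  split
  · rw [norm_mul]; exact mul_le_mul (hf x) (hg (j-x)) (norm_nonneg _) hBf
  · simpa using mul_nonneg hBf hBg

private lemma laurent_mul_support (f g : LaurentPolynomial ℂ) (j : ℤ) (h : (f * g).coeff j ≠ 0) :
    ∃ x y : ℤ, x + y = j ∧ f.coeff x ≠ 0 ∧ g.coeff y ≠ 0 := by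
  have hj : j ∈ (f * g).coeff.support := Finsupp.mem_support_iff.mpr h
  have hmem := AddMonoidAlgebra.support_coeff_mul_subset f g hj
  rw [Finset.mem_add] at hmem
  obtain ⟨x, hx, y, hy, hxy⟩ := hmem
  exact ⟨x, y, hxy, Finsupp.mem_support_iff.mp hx, Finsupp.mem_support_iff.mp hy⟩

private lemma int_sign_abs_le (x : ℤ) : |((x.sign : ℤ) : ℝ)| ≤ 1 := by
  rcases lt_trichotomy x 0 with h|h|h
  · rw [Int.sign_eq_neg_one_of_neg h]; norm_num
  · rw [h]; norm_num
  · rw [Int.sign_eq_one_of_pos h]; norm_num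

set_option maxHeartbeats 1000000 in
/-- If `P` is moderate and `Q` is moderate (with bounds polynomial in
`|𝐍|`, for `0 ≤ u ≤ |𝐍| - g`), then the generalized cabling operation applied to `P`
and `Q` produces a moderate multi-sequence. -/
theorem moderate_cablingOp
    (c : ℕ) (hc : 1 ≤ c) (i : Fin c) (g p : ℕ) (hg : 1 ≤ g) (hp : 1 ≤ p)
    (P : (Fin c → ℕ+) → LaurentPolynomial ℂ) (hP : Moderate P)
    (Q : (Fin g → ℕ+) → ℕ → LaurentPolynomial ℂ)
    (hQ : ∃ C m : ℝ, 0 < C ∧ 0 < m ∧ ∀ (N : Fin g → ℕ+) (u : ℕ),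
      u ≤ (∑ k, (N k : ℕ)) - g →
        (∀ j : ℤ, (Q N u).coeff j ≠ 0 → |(j : ℝ)| < C * (∑ k, ((N k : ℕ) : ℝ)) ^ m) ∧
        (∀ j : ℤ, ‖(Q N u).coeff j‖ < C * (∑ k, ((N k : ℕ) : ℝ)) ^ m)) :
    Moderate (cablingOp c i g p P Q) := by
  classical
  obtain ⟨C₁, m₁, hC₁, hm₁, hP⟩ := hP
  obtain ⟨C₂, m₂, hC₂, hm₂, hQ⟩ := hQ
  have hp2 : (0:ℝ) < (p:ℝ) + 2 := by positivity
  refine ⟨(2*C₂+3) * C₂ * (C₁ * ((p:ℝ)+2) ^ m₁) + C₂ + C₁ * ((p:ℝ)+2) ^ m₁ + 1,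
    m₁ + 2*m₂ + 1, by positivity, by positivity, ?_⟩
  intro K
  simp only [cablingOp]
  set S : ℕ := ∑ k, ((K (Sum.inr k) : ℕ)) with hSdef
  set T : ℝ := ∑ k, ((K k : ℕ) : ℝ) with hTdef
  clear_value S T
  have hgS : g ≤ S := by
    rw [hSdef]
    calc g = ∑ _k : Fin g, 1 := by simp
    _ ≤ ∑ k, ((K (Sum.inr k) : ℕ)) := Finset.sum_le_sum fun k _ => (K (Sum.inr k)).one_le
  have hS1 : 1 ≤ S := le_trans hg hgS
  have hcastZ : (∑ k, (((K (Sum.inr k) : ℕ)) : ℤ)) = (S : ℤ) := by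
    rw [hSdef]; push_cast; rfl
  have hsplit : T = (∑ a : {k : Fin c // k ≠ i}, ((K (Sum.inl a) : ℕ) : ℝ)) + (S : ℝ) := by
    rw [hTdef, Fintype.sum_sum_type]
    congr 1
    rw [hSdef]; push_cast; rfl
  have hinl0 : 0 ≤ ∑ a : {k : Fin c // k ≠ i}, ((K (Sum.inl a) : ℕ) : ℝ) :=
    Finset.sum_nonneg fun a _ => by positivity
  have hST : (S:ℝ) ≤ T := by rw [hsplit]; linarith
  have hSR1 : (1:ℝ) ≤ (S:ℝ) := by exact_mod_cast hS1
  have hT1 : (1:ℝ) ≤ T := le_trans hSR1 hST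
  have hT0 : (0:ℝ) < T := lt_of_lt_of_le one_pos hT1
  have hTm1 : (0:ℝ) < T ^ m₁ := Real.rpow_pos_of_pos hT0 _
  have hTm2 : (0:ℝ) < T ^ m₂ := Real.rpow_pos_of_pos hT0 _
  have hBQ0 : (0:ℝ) < C₂ * T ^ m₂ := mul_pos hC₂ hTm2
  have hBP0 : (0:ℝ) < C₁ * ((p:ℝ)+2) ^ m₁ * T ^ m₁ :=
    mul_pos (by positivity) hTm1
  -- bounds for Q
  have hQb : ∀ u : ℕ, u ≤ S - g →
      (∀ j : ℤ, (Q (fun k => K (Sum.inr k)) u).coeff j ≠ 0 → |(j:ℝ)| < C₂ * T ^ m₂) ∧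
      (∀ j : ℤ, ‖(Q (fun k => K (Sum.inr k)) u).coeff j‖ ≤ C₂ * T ^ m₂) := by
    intro u hu
    obtain ⟨h1, h2⟩ := hQ (fun k => K (Sum.inr k)) u (by rw [← hSdef]; exact hu)
    have hsum : (∑ k : Fin g, (((K (Sum.inr k) : ℕ)) : ℝ)) = (S:ℝ) := by
      rw [hSdef]; push_cast; rfl
    have hb : C₂ * ((S:ℝ)) ^ m₂ ≤ C₂ * T ^ m₂ :=
      mul_le_mul_of_nonneg_left
        (Real.rpow_le_rpow (by positivity) hST hm₂.le) hC₂.le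
    constructor
    · intro j hj
      have h3 := h1 j hj
      rw [hsum] at h3
      exact h3.trans_le hb
    · intro j
      have h3 := (h2 j).le
      rw [hsum] at h3
      exact h3.trans hb
  -- bounds for P
  have hPb : ∀ M : Fin c → ℕ+, ((M i : ℕ) : ℝ) ≤ (p:ℝ) * T + 1 →
      (∀ k, ∀ h : k ≠ i, M k = K (Sum.inl ⟨k, h⟩)) →
      (∀ j : ℤ, (P M).coeff j ≠ 0 → |(j:ℝ)| < C₁ * ((p:ℝ)+2) ^ m₁ * T ^ m₁) ∧
      (∀ j : ℤ, ‖(P M).coeff j‖ ≤ C₁ * ((p:ℝ)+2) ^ m₁ * T ^ m₁) := by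
    intro M hMi hMk
    have hsum : (∑ k, ((M k : ℕ) : ℝ)) ≤ ((p:ℝ)+2) * T := by
      have e1 : (∑ k, ((M k : ℕ) : ℝ))
          = ((M i : ℕ) : ℝ) + ∑ k ∈ Finset.univ.erase i, ((M k : ℕ) : ℝ) :=
        (Finset.add_sum_erase _ _ (Finset.mem_univ i)).symm
      have e2 : ∑ k ∈ Finset.univ.erase i, ((M k : ℕ) : ℝ)
          = ∑ a : {k : Fin c // k ≠ i}, ((K (Sum.inl a) : ℕ) : ℝ) := by
        rw [Finset.sum_subtype (p := fun k => k ≠ i) (Finset.univ.erase i) (fun x => by simp)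
          (fun k => ((M k : ℕ) : ℝ))]
        exact Finset.sum_congr rfl fun a _ => by rw [hMk a.1 a.2]
      rw [e1, e2]
      linarith [hsplit]
    have h0 : (0:ℝ) ≤ ∑ k, ((M k : ℕ) : ℝ) := Finset.sum_nonneg fun k _ => by positivity
    have hb : C₁ * (∑ k, ((M k : ℕ) : ℝ)) ^ m₁ ≤ C₁ * ((p:ℝ)+2) ^ m₁ * T ^ m₁ := by
      have h4 := Real.rpow_le_rpow h0 hsum hm₁.le
      rw [Real.mul_rpow hp2.le hT0.le] at h4
      calc C₁ * (∑ k, ((M k : ℕ) : ℝ)) ^ m₁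
          ≤ C₁ * (((p:ℝ)+2) ^ m₁ * T ^ m₁) := mul_le_mul_of_nonneg_left h4 hC₁.le
        _ = C₁ * ((p:ℝ)+2) ^ m₁ * T ^ m₁ := (mul_assoc _ _ _).symm
    obtain ⟨h1, h2⟩ := hP M
    exact ⟨fun j hj => (h1 j hj).trans_le hb, fun j => (h2 j).le.trans hb⟩
  -- per-term bounds
  have hterm : ∀ u : ℕ, u ≤ S - g →
      (∀ j : ℤ, ((Q (fun k => K (Sum.inr k)) u) *
          P (fun k => if h : k = i then
              ⟨max ((2 * (u : ℤ) - ((∑ k'', (((K (Sum.inr k'') : ℕ)) : ℤ)) - g)) * p + 1).natAbs 1,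
                lt_of_lt_of_le Nat.one_pos (le_max_right _ _)⟩
            else K (Sum.inl ⟨k, h⟩))).coeff j ≠ 0 →
          |(j:ℝ)| < C₂ * T ^ m₂ + C₁ * ((p:ℝ)+2) ^ m₁ * T ^ m₁) ∧
      (∀ j : ℤ, ‖((Q (fun k => K (Sum.inr k)) u) *
          P (fun k => if h : k = i then
              ⟨max ((2 * (u : ℤ) - ((∑ k'', (((K (Sum.inr k'') : ℕ)) : ℤ)) - g)) * p + 1).natAbs 1,
                lt_of_lt_of_le Nat.one_pos (le_max_right _ _)⟩
            else K (Sum.inl ⟨k, h⟩))).coeff j‖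
          ≤ (2 * (C₂ * T ^ m₂) + 3) * (C₂ * T ^ m₂) * (C₁ * ((p:ℝ)+2) ^ m₁ * T ^ m₁)) := by
    intro u hu
    obtain ⟨hq1, hq2⟩ := hQb u hu
    set M : Fin c → ℕ+ := fun k => if h : k = i then
        (⟨max ((2 * (u : ℤ) - ((∑ k'', (((K (Sum.inr k'') : ℕ)) : ℤ)) - g)) * p + 1).natAbs 1,
          lt_of_lt_of_le Nat.one_pos (le_max_right _ _)⟩ : ℕ+)
      else K (Sum.inl ⟨k, h⟩) with hM
    have huZ : (u:ℤ) ≤ (S:ℤ) - g := by omega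
    have hvZ : |(2 * (u : ℤ) - ((∑ k'', (((K (Sum.inr k'') : ℕ)) : ℤ)) - g)) * p + 1| ≤ ((∑ k'', (((K (Sum.inr k'') : ℕ)) : ℤ)) - g) * p + 1 := by
      have habs : |2 * (u : ℤ) - ((S:ℤ) - g)| ≤ (S:ℤ) - g := by
        rw [abs_le]; omega
      calc |(2 * (u : ℤ) - ((∑ k'', (((K (Sum.inr k'') : ℕ)) : ℤ)) - g)) * p + 1|
          ≤ |(2 * (u : ℤ) - ((∑ k'', (((K (Sum.inr k'') : ℕ)) : ℤ)) - g)) * p| + 1 := by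
            simpa using abs_add_le ((2 * (u : ℤ) - ((∑ k'', (((K (Sum.inr k'') : ℕ)) : ℤ)) - g)) * p) 1
        _ = |2 * (u : ℤ) - ((∑ k'', (((K (Sum.inr k'') : ℕ)) : ℤ)) - g)| * p + 1 := by
            rw [abs_mul, abs_of_nonneg (by positivity : (0:ℤ) ≤ (p:ℤ))]
        _ ≤ ((∑ k'', (((K (Sum.inr k'') : ℕ)) : ℤ)) - g) * p + 1 := by
            rw [hcastZ]
            have := mul_le_mul_of_nonneg_right habs (by positivity : (0:ℤ) ≤ (p:ℤ))
            linarith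
    have hvN : ((2 * (u : ℤ) - ((∑ k'', (((K (Sum.inr k'') : ℕ)) : ℤ)) - g)) * p + 1).natAbs ≤ (S - g) * p + 1 := by
      have h2 : ((((2 * (u : ℤ) - ((∑ k'', (((K (Sum.inr k'') : ℕ)) : ℤ)) - g)) * p + 1).natAbs : ℤ))
          ≤ (((S - g) * p + 1 : ℕ) : ℤ) := by
        rw [← Int.abs_eq_natAbs]
        have hcast : (((S - g) * p + 1 : ℕ) : ℤ) = ((∑ k'', (((K (Sum.inr k'') : ℕ)) : ℤ)) - g) * p + 1 := by
          rw [hcastZ]; push_cast [Nat.cast_sub hgS]; ring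
        rw [hcast]
        exact hvZ
      exact_mod_cast h2
    have hMi : ((M i : ℕ) : ℝ) ≤ (p:ℝ) * T + 1 := by
      have hMival : (M i : ℕ) = max ((2 * (u : ℤ) - ((∑ k'', (((K (Sum.inr k'') : ℕ)) : ℤ)) - g)) * p + 1).natAbs 1 := by
        rw [hM]; simp
      rw [hMival]
      have hmax : max ((2 * (u : ℤ) - ((∑ k'', (((K (Sum.inr k'') : ℕ)) : ℤ)) - g)) * p + 1).natAbs 1 ≤ (S - g) * p + 1 :=
        max_le hvN (Nat.le_add_left 1 _)
      have hcastR : (((S - g) * p + 1 : ℕ) : ℝ) = ((S:ℝ) - g) * p + 1 := by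
        push_cast [Nat.cast_sub hgS]; ring
      have h5 : ((max ((2 * (u : ℤ) - ((∑ k'', (((K (Sum.inr k'') : ℕ)) : ℤ)) - g)) * p + 1).natAbs 1 : ℕ) : ℝ)
          ≤ (((S - g) * p + 1 : ℕ) : ℝ) := by exact_mod_cast hmax
      rw [hcastR] at h5
      have h6 : ((S:ℝ) - (g:ℝ)) * p ≤ T * p :=
        mul_le_mul_of_nonneg_right
          (by linarith [show (0:ℝ) ≤ (g:ℝ) from Nat.cast_nonneg g]) (Nat.cast_nonneg p)
      linarith
    obtain ⟨hp1, hp2'⟩ := hPb M hMi (fun k h => dif_neg h)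
    constructor
    · intro j hj
      obtain ⟨x, y, hxy, hx, hy⟩ := laurent_mul_support _ _ _ hj
      have b1 := hq1 x hx
      have b2 := hp1 y hy
      calc |(j:ℝ)| = |((x + y : ℤ) : ℝ)| := by rw [hxy]
        _ ≤ |(x:ℝ)| + |(y:ℝ)| := by push_cast; exact abs_add_le _ _
        _ < C₂ * T ^ m₂ + C₁ * ((p:ℝ)+2) ^ m₁ * T ^ m₁ := by linarith
    · intro j
      have hcard := laurent_support_card_le (Q (fun k => K (Sum.inr k)) u)
        (C₂ * T ^ m₂) hBQ0 hq1
      have hmc := laurent_mul_coeff_le (Q (fun k => K (Sum.inr k)) u) (P M) _ _ hq2 hp2' j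
      refine hmc.trans ?_
      exact mul_le_mul_of_nonneg_right
        (mul_le_mul_of_nonneg_right hcard hBQ0.le) hBP0.le
  -- exponent bookkeeping
  have e1 : T ^ m₂ ≤ T ^ (m₁ + 2*m₂ + 1) :=
    Real.rpow_le_rpow_of_exponent_le hT1 (by linarith)
  have e2 : T ^ m₁ ≤ T ^ (m₁ + 2*m₂ + 1) :=
    Real.rpow_le_rpow_of_exponent_le hT1 (by linarith)
  have e3 : (0:ℝ) < T ^ (m₁ + 2*m₂ + 1) := Real.rpow_pos_of_pos hT0 _
  have hDpos : (0:ℝ) < (2*C₂+3) * C₂ * (C₁ * ((p:ℝ)+2) ^ m₁) := by positivity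
  constructor
  · -- degree bound
    intro j hj
    rw [AddMonoidAlgebra.coeff_sum, Finset.sum_apply'] at hj
    obtain ⟨u, hu, hne⟩ := Finset.exists_ne_zero_of_sum_ne_zero hj
    rw [AddMonoidAlgebra.coeff_smul, Finsupp.smul_apply, smul_eq_mul] at hne
    have hprod := right_ne_zero_of_mul hne
    have hu' : u ≤ S - g := Nat.lt_succ_iff.mp (Finset.mem_range.mp hu)
    have hlt := (hterm u hu').1 j hprod
    have d1 : C₂ * T ^ m₂ ≤ C₂ * T ^ (m₁ + 2*m₂ + 1) := mul_le_mul_of_nonneg_left e1 hC₂.le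
    have d2 : C₁ * ((p:ℝ)+2) ^ m₁ * T ^ m₁ ≤ C₁ * ((p:ℝ)+2) ^ m₁ * T ^ (m₁ + 2*m₂ + 1) :=
      mul_le_mul_of_nonneg_left e2 (by positivity)
    have hDT : (0:ℝ) ≤ (2*C₂+3) * C₂ * (C₁ * ((p:ℝ)+2) ^ m₁) * T ^ (m₁ + 2*m₂ + 1) :=
      le_of_lt (mul_pos hDpos e3)
    nlinarith [hlt, d1, d2, hDT, e3]
  · -- coefficient bound
    intro j
    rw [AddMonoidAlgebra.coeff_sum, Finset.sum_apply']
    have hE : (0:ℝ) ≤ (2 * (C₂ * T ^ m₂) + 3) * (C₂ * T ^ m₂) * (C₁ * ((p:ℝ)+2) ^ m₁ * T ^ m₁) :=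
      le_of_lt (mul_pos (mul_pos (by linarith) hBQ0) hBP0)
    have hsumle : ∑ u ∈ Finset.range (S - g + 1),
        ‖(((((2 * (u:ℤ) - ((∑ k'', (((K (Sum.inr k'') : ℕ)) : ℤ)) - g)) * p + 1).sign : ℂ)) •
          ((Q (fun k => K (Sum.inr k)) u) *
            P (fun k => if h : k = i then
                ⟨max ((2 * (u : ℤ) - ((∑ k'', (((K (Sum.inr k'') : ℕ)) : ℤ)) - g)) * p + 1).natAbs 1,
                  lt_of_lt_of_le Nat.one_pos (le_max_right _ _)⟩
              else K (Sum.inl ⟨k, h⟩)))).coeff j‖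
        ≤ (S - g + 1) •
          ((2 * (C₂ * T ^ m₂) + 3) * (C₂ * T ^ m₂) * (C₁ * ((p:ℝ)+2) ^ m₁ * T ^ m₁)) := by
      refine le_trans (Finset.sum_le_card_nsmul _ _
        ((2 * (C₂ * T ^ m₂) + 3) * (C₂ * T ^ m₂) * (C₁ * ((p:ℝ)+2) ^ m₁ * T ^ m₁)) ?_) ?_
      · intro u hu
        have hu' : u ≤ S - g := Nat.lt_succ_iff.mp (Finset.mem_range.mp hu)
        rw [AddMonoidAlgebra.coeff_smul, Finsupp.smul_apply, smul_eq_mul, norm_mul]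
        have hs1 : ‖(((2 * (u:ℤ) - ((∑ k'', (((K (Sum.inr k'') : ℕ)) : ℤ)) - g)) * p + 1).sign : ℂ)‖ ≤ 1 := by
          rw [Complex.norm_intCast]
          exact int_sign_abs_le _
        have hs2 := (hterm u hu').2 j
        calc ‖(((2 * (u:ℤ) - ((∑ k'', (((K (Sum.inr k'') : ℕ)) : ℤ)) - g)) * p + 1).sign : ℂ)‖ *
              ‖_‖ ≤ 1 *
              ((2 * (C₂ * T ^ m₂) + 3) * (C₂ * T ^ m₂) * (C₁ * ((p:ℝ)+2) ^ m₁ * T ^ m₁)) :=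
            mul_le_mul hs1 hs2 (norm_nonneg _) one_pos.le
          _ = _ := one_mul _
      · rw [Finset.card_range]
    refine lt_of_le_of_lt ((norm_sum_le _ _).trans hsumle) ?_
    rw [nsmul_eq_mul]
    have hcardT : ((S - g + 1 : ℕ) : ℝ) ≤ T := by
      have : S - g + 1 ≤ S := by omega
      have h7 : ((S - g + 1 : ℕ) : ℝ) ≤ (S : ℝ) := by exact_mod_cast this
      linarith
    have hone : (1:ℝ) ≤ T ^ m₂ := Real.one_le_rpow hT1 hm₂.le
    have hTT : T * T ^ m₂ * T ^ m₂ * T ^ m₁ = T ^ (m₁ + 2*m₂ + 1) := by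
      rw [show T * T ^ m₂ * T ^ m₂ * T ^ m₁
          = T ^ (1:ℝ) * T ^ m₂ * T ^ m₂ * T ^ m₁ by rw [Real.rpow_one],
        ← Real.rpow_add hT0, ← Real.rpow_add hT0, ← Real.rpow_add hT0]
      congr 1
      ring
    calc ((S - g + 1 : ℕ) : ℝ) *
        ((2 * (C₂ * T ^ m₂) + 3) * (C₂ * T ^ m₂) * (C₁ * ((p:ℝ)+2) ^ m₁ * T ^ m₁))
        ≤ T * ((2 * (C₂ * T ^ m₂) + 3) * (C₂ * T ^ m₂) * (C₁ * ((p:ℝ)+2) ^ m₁ * T ^ m₁)) :=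
          mul_le_mul_of_nonneg_right hcardT hE
      _ ≤ T * (((2 * C₂ + 3) * T ^ m₂) * (C₂ * T ^ m₂) * (C₁ * ((p:ℝ)+2) ^ m₁ * T ^ m₁)) := by
          have hstep : 2 * (C₂ * T ^ m₂) + 3 ≤ (2 * C₂ + 3) * T ^ m₂ := by nlinarith
          exact mul_le_mul_of_nonneg_left (mul_le_mul_of_nonneg_right
            (mul_le_mul_of_nonneg_right hstep hBQ0.le) hBP0.le) hT0.le
      _ = (2*C₂+3) * C₂ * (C₁ * ((p:ℝ)+2) ^ m₁) * T ^ (m₁ + 2*m₂ + 1) := by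
          rw [← hTT]; ring
      _ < ((2*C₂+3) * C₂ * (C₁ * ((p:ℝ)+2) ^ m₁) + C₂ + C₁ * ((p:ℝ)+2) ^ m₁ + 1) *
          T ^ (m₁ + 2*m₂ + 1) := by
          have hpos : (0:ℝ) < C₂ + C₁ * ((p:ℝ)+2) ^ m₁ + 1 := by positivity
          linarith [mul_pos hpos e3]
end

section
/- Fix integers c ≥ 1 and s ≥ 0. Let P be a moderate multi-sequence of Laurent polynomials over ℂ indexed by c-tuples of positive integers, and suppose that for each N ≥ 1 the quantum integer [N] = ∑_{j=0}^{N−1} A^{2N−2−4j} (so that [N] = (A^{2N} − A^{−2N})/(A^2 − A^{−2})) satisfies: [N]^s divides P_{(N,…,N)} in the ring of Laurent polynomials ℂ[A, A^{−1}], with quotient Q_N := P_{(N,…,N)}/[N]^s. Then limsup_{N→∞} |Q_N(e^{iπ/2N})|^{1/N} ≤ 1; equivalently, lim_{N→∞} (2π/N) · log max(1, |Q_N(e^{iπ/2N})|) = 0. (This is the paper's proof that the normalized colored Jones polynomial of a zero-volume link has zero exponential growth rate at A = e^{iπ/2N}, establishing the volume conjecture for all zero-volume knots and links.) -/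
open LaurentPolynomial

/-- Evaluation of a Laurent polynomial `∑_j a_j A^j` at a nonzero complex number. -/
noncomputable def evalL (p : LaurentPolynomial ℂ) (z : ℂ) : ℂ :=
  ∑ j ∈ p.coeff.support, p.coeff j * z ^ j

/-- The quantum integer `[N] = ∑_{j=0}^{N-1} A^{2N-2-4j}`, as a Laurent polynomial. -/
noncomputable def qint (N : ℕ+) : LaurentPolynomial ℂ :=
  ∑ j ∈ Finset.range (N : ℕ), T (2 * ((N : ℕ) : ℤ) - 2 - 4 * (j : ℤ))

namespace MNZG

def Bnd (p : LaurentPolynomial ℂ) (D : ℕ) : Prop :=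
  (∀ j : ℤ, p.coeff j ≠ 0 → |j| ≤ (D : ℤ)) ∧ ∀ j : ℤ, ‖p.coeff j‖ ≤ (D : ℝ)

lemma Bnd.support_subset {p : LaurentPolynomial ℂ} {D : ℕ} (h : Bnd p D) :
    p.coeff.support ⊆ Finset.Icc (-(D:ℤ)) D := by
  intro j hj
  rw [Finsupp.mem_support_iff] at hj
  have := h.1 j hj
  rw [abs_le] at this
  rw [Finset.mem_Icc]
  exact this

lemma Bnd.sum_abs_le {p : LaurentPolynomial ℂ} {D : ℕ} (h : Bnd p D) :
    ∑ j ∈ p.coeff.support, ‖p.coeff j‖ ≤ ((2*D+1)*D : ℕ) := by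
  calc ∑ j ∈ p.coeff.support, ‖p.coeff j‖
      ≤ ∑ j ∈ Finset.Icc (-(D:ℤ)) D, ‖p.coeff j‖ := by
        apply Finset.sum_le_sum_of_subset_of_nonneg h.support_subset
        intro i _ _; exact norm_nonneg _
    _ ≤ (Finset.Icc (-(D:ℤ)) D).card • (D : ℝ) := by
        apply Finset.sum_le_card_nsmul
        intro i _; exact h.2 i
    _ ≤ ((2*D+1)*D : ℕ) := by
        rw [nsmul_eq_mul, Int.card_Icc]
        have : ((D:ℤ) + 1 - -(D:ℤ)).toNat = 2*D+1 := by omega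
        rw [this]
        push_cast
        ring_nf
        exact le_refl _

lemma Bnd.eval_abs_le {p : LaurentPolynomial ℂ} {D : ℕ} (h : Bnd p D) {z : ℂ}
    (hz : ‖z‖ = 1) :
    ‖evalL p z‖ ≤ ((2*D+1)*D : ℕ) := by
  calc ‖evalL p z‖ ≤ ∑ j ∈ p.coeff.support, ‖p.coeff j * z ^ j‖ :=
        norm_sum_le _ _
    _ = ∑ j ∈ p.coeff.support, ‖p.coeff j‖ := by
        apply Finset.sum_congr rfl
        intro j _
        rw [norm_mul, norm_zpow, hz, one_zpow, mul_one]
    _ ≤ ((2*D+1)*D : ℕ) := h.sum_abs_le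


lemma T_mul_apply (a : ℤ) (p : LaurentPolynomial ℂ) (j : ℤ) :
    (T a * p : LaurentPolynomial ℂ).coeff j = p.coeff (j - a) := by
  rw [T, AddMonoidAlgebra.coeff_single_mul_apply, one_mul, neg_add_eq_sub]

lemma Tsub_mul_apply (a : ℤ) (p : LaurentPolynomial ℂ) (j : ℤ) :
    ((T a - 1) * p : LaurentPolynomial ℂ).coeff j = p.coeff (j - a) - p.coeff j := by
  rw [sub_mul, one_mul, AddMonoidAlgebra.coeff_sub, Finsupp.sub_apply, T_mul_apply]

section Div
variable {n : ℤ} {p q : LaurentPolynomial ℂ}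

lemma telescope_up (hpq : p = (T n - 1) * q) (j : ℤ) (K : ℕ) :
    ∑ k ∈ Finset.range K, p.coeff (j + (k+1)*n) = q.coeff j - q.coeff (j + K*n) := by
  induction K with
  | zero => simp
  | succ K ih =>
    rw [Finset.sum_range_succ, ih, hpq, Tsub_mul_apply]
    have h1 : j + ((K:ℤ)+1)*n - n = j + K*n := by ring
    push_cast
    rw [h1]
    ring

lemma telescope_down (hpq : p = (T n - 1) * q) (j : ℤ) (K : ℕ) :
    ∑ k ∈ Finset.range K, p.coeff (j - k*n) = q.coeff (j - K*n) - q.coeff j := by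
  induction K with
  | zero => simp
  | succ K ih =>
    rw [Finset.sum_range_succ, ih, hpq, Tsub_mul_apply]
    have h1 : j - (K:ℤ)*n - n = j - ((K:ℤ)+1)*n := by ring
    push_cast
    rw [h1]
    ring

lemma exists_up (hn : 1 ≤ n) (q : LaurentPolynomial ℂ) (j : ℤ) :
    ∃ K : ℕ, q.coeff (j + K*n) = 0 := by
  set B : ℕ := q.coeff.support.sup (fun i => i.toNat) with hB
  refine ⟨B + (-j).toNat + 1, ?_⟩
  rw [← Finsupp.notMem_support_iff]
  intro hmem
  have h1 : (j + ((B + (-j).toNat + 1 : ℕ) : ℤ) * n).toNat ≤ B :=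
    Finset.le_sup (f := fun i => i.toNat) hmem
  have h2 : -j ≤ ((-j).toNat : ℤ) := Int.self_le_toNat _
  have h4 : ((B + (-j).toNat + 1 : ℕ) : ℤ) * 1 ≤ ((B + (-j).toNat + 1 : ℕ) : ℤ) * n :=
    mul_le_mul_of_nonneg_left hn (by positivity)
  push_cast at h1 h4
  omega

lemma exists_down (hn : 1 ≤ n) (q : LaurentPolynomial ℂ) (j : ℤ) :
    ∃ K : ℕ, q.coeff (j - K*n) = 0 := by
  set B : ℕ := q.coeff.support.sup (fun i => (-i).toNat) with hB
  refine ⟨B + j.toNat + 1, ?_⟩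
  rw [← Finsupp.notMem_support_iff]
  intro hmem
  have h1 : (-(j - ((B + j.toNat + 1 : ℕ) : ℤ) * n)).toNat ≤ B :=
    Finset.le_sup (f := fun i => (-i).toNat) hmem
  have h2 : j ≤ (j.toNat : ℤ) := Int.self_le_toNat _
  have h4 : ((B + j.toNat + 1 : ℕ) : ℤ) * 1 ≤ ((B + j.toNat + 1 : ℕ) : ℤ) * n :=
    mul_le_mul_of_nonneg_left hn (by positivity)
  push_cast at h1 h4
  omega


end Div

section Div2
variable {n : ℤ} {p q : LaurentPolynomial ℂ}

lemma key_up (hn : 1 ≤ n) (hpq : p = (T n - 1) * q) (j : ℤ) :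
    ∃ K : ℕ, q.coeff j = ∑ k ∈ Finset.range K, p.coeff (j + ((k:ℤ)+1)*n) := by
  obtain ⟨K, hK⟩ := exists_up hn q j
  refine ⟨K, ?_⟩
  have := telescope_up hpq j K
  rw [hK, sub_zero] at this
  exact this.symm

lemma key_down (hn : 1 ≤ n) (hpq : p = (T n - 1) * q) (j : ℤ) :
    ∃ K : ℕ, q.coeff j = -∑ k ∈ Finset.range K, p.coeff (j - (k:ℤ)*n) := by
  obtain ⟨K, hK⟩ := exists_down hn q j
  refine ⟨K, ?_⟩
  have := telescope_down hpq j K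
  rw [hK, zero_sub] at this
  rw [this, neg_neg]

lemma bnd_of_dvd (hn : 1 ≤ n) (hpq : p = (T n - 1) * q) {D : ℕ} (h : Bnd p D) :
    Bnd q ((2*D+1)*D) := by
  classical
  constructor
  · intro j hj
    rw [abs_le]
    constructor
    · -- lower bound
      obtain ⟨K, hK⟩ := key_down hn hpq j
      have hex : ∃ k ∈ Finset.range K, p.coeff (j - (k:ℤ)*n) ≠ 0 := by
        by_contra hcon
        push_neg at hcon
        rw [Finset.sum_eq_zero (fun k hk => hcon k hk), neg_zero] at hK
        exact hj hK
      obtain ⟨k, _, hk⟩ := hex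
      have h1 := h.1 _ hk
      rw [abs_le] at h1
      have h2 : (0:ℤ) ≤ (k:ℤ)*n := by positivity
      have h3 : (D:ℤ) ≤ ((2*D+1)*D : ℕ) := by push_cast; nlinarith [Nat.cast_nonneg (α := ℤ) D]
      omega
    · -- upper bound
      obtain ⟨K, hK⟩ := key_up hn hpq j
      have hex : ∃ k ∈ Finset.range K, p.coeff (j + ((k:ℤ)+1)*n) ≠ 0 := by
        by_contra hcon
        push_neg at hcon
        rw [Finset.sum_eq_zero (fun k hk => hcon k hk)] at hK
        exact hj hK
      obtain ⟨k, _, hk⟩ := hex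
      have h1 := h.1 _ hk
      rw [abs_le] at h1
      have h2 : (0:ℤ) ≤ ((k:ℤ)+1)*n := by positivity
      have h3 : (D:ℤ) ≤ ((2*D+1)*D : ℕ) := by push_cast; nlinarith [Nat.cast_nonneg (α := ℤ) D]
      omega
  · intro j
    by_cases hj : q.coeff j = 0
    · rw [hj, norm_zero]; positivity
    obtain ⟨K, hK⟩ := key_up hn hpq j
    set f : ℕ → ℤ := fun k => j + ((k:ℤ)+1)*n with hf
    have hinj : ∀ a ∈ Finset.range K, ∀ b ∈ Finset.range K, f a = f b → a = b := by
      intro a _ b _ hab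
      have hn0 : n ≠ 0 := by omega
      simp only [hf] at hab
      have : ((a:ℤ)+1)*n = ((b:ℤ)+1)*n := by omega
      have := mul_right_cancel₀ hn0 this
      omega
    calc ‖q.coeff j‖ ≤ ∑ k ∈ Finset.range K, ‖p.coeff (f k)‖ := by
          rw [hK]
          exact norm_sum_le _ _
      _ = ∑ i ∈ (Finset.range K).image f, ‖p.coeff i‖ := by
          rw [Finset.sum_image hinj]
      _ = ∑ i ∈ ((Finset.range K).image f).filter (fun i => p.coeff i ≠ 0), ‖p.coeff i‖ :=
          (Finset.sum_filter_of_ne (fun i _ hne => by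
            intro hp0
            rw [hp0, norm_zero] at hne
            exact hne rfl)).symm
      _ ≤ ∑ i ∈ p.coeff.support, ‖p.coeff i‖ := by
          apply Finset.sum_le_sum_of_subset_of_nonneg
          · intro i hi
            rw [Finset.mem_filter] at hi
            exact Finsupp.mem_support_iff.mpr hi.2
          · intro i _ _; exact norm_nonneg _
      _ ≤ ((2*D+1)*D : ℕ) := h.sum_abs_le

end Div2


lemma key_identity (N : ℕ+) :
    (T 4 - 1) * qint N = T (2 - 2*((N:ℕ):ℤ)) * (T (4*((N:ℕ):ℤ)) - 1) := by
  have step : ∀ j : ℕ, ((T 4 - 1) * T (2 * ((N:ℕ):ℤ) - 2 - 4 * (j:ℤ)) : LaurentPolynomial ℂ)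
      = T (2*((N:ℕ):ℤ) + 2 - 4*(j:ℤ)) - T (2*((N:ℕ):ℤ) + 2 - 4*((j:ℤ)+1)) := by
    intro j
    rw [sub_mul, one_mul]
    rw [show (2*((N:ℕ):ℤ) + 2 - 4*(j:ℤ)) = 4 + (2 * ((N:ℕ):ℤ) - 2 - 4 * (j:ℤ)) by ring, T_add]
    rw [show (2*((N:ℕ):ℤ) + 2 - 4*((j:ℤ)+1)) = (2 * ((N:ℕ):ℤ) - 2 - 4 * (j:ℤ)) by ring]
  rw [qint, Finset.mul_sum]
  rw [Finset.sum_congr rfl (fun j _ => step j)]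
  have tele := Finset.sum_range_sub' (f := fun j : ℕ => (T (2*((N:ℕ):ℤ) + 2 - 4*(j:ℤ)) : LaurentPolynomial ℂ)) (N:ℕ)
  push_cast at tele ⊢
  rw [tele, mul_sub, ← T_add, mul_one]
  congr 2 <;> ring

lemma bnd_T_mul {p : LaurentPolynomial ℂ} {D : ℕ} (a : ℤ) (h : Bnd p D) :
    Bnd (T a * p) (D + a.natAbs) := by
  constructor
  · intro j hj
    rw [T_mul_apply] at hj
    have h1 := h.1 _ hj
    calc |j| = |(j - a) + a| := by congr 1; ring
      _ ≤ |j - a| + |a| := abs_add_le _ _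
      _ ≤ (D:ℤ) + a.natAbs := add_le_add h1 (le_of_eq (Int.abs_eq_natAbs a))
      _ = ((D + a.natAbs : ℕ) : ℤ) := by push_cast; ring
  · intro j
    rw [T_mul_apply]
    refine le_trans (h.2 _) ?_
    push_cast
    linarith [Nat.cast_nonneg (α := ℝ) a.natAbs]

lemma bnd_Tsub_mul {p : LaurentPolynomial ℂ} {D : ℕ} (a : ℤ) (h : Bnd p D) :
    Bnd ((T a - 1) * p) (2*D + a.natAbs) := by
  have hD : (0:ℤ) ≤ (D:ℤ) := Int.natCast_nonneg _
  constructor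
  · intro j hj
    rw [Tsub_mul_apply] at hj
    have hor : p.coeff (j - a) ≠ 0 ∨ p.coeff j ≠ 0 := by
      by_contra hcon
      push_neg at hcon
      rw [hcon.1, hcon.2, sub_self] at hj
      exact hj rfl
    rcases hor with h1 | h1
    · have h2 := h.1 _ h1
      calc |j| = |(j - a) + a| := by congr 1; ring
        _ ≤ |j - a| + |a| := abs_add_le _ _
        _ ≤ (D:ℤ) + a.natAbs := add_le_add h2 (le_of_eq (Int.abs_eq_natAbs a))
        _ ≤ ((2*D + a.natAbs : ℕ) : ℤ) := by push_cast; linarith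
    · have h2 := h.1 _ h1
      refine le_trans h2 ?_
      push_cast
      linarith [abs_nonneg a, Int.natCast_nonneg a.natAbs]
  · intro j
    rw [Tsub_mul_apply]
    calc ‖p.coeff (j-a) - p.coeff j‖ ≤ ‖p.coeff (j-a)‖ + ‖p.coeff j‖ :=
          norm_sub_le _ _
      _ ≤ (D:ℝ) + D := add_le_add (h.2 _) (h.2 _)
      _ ≤ ((2*D + a.natAbs : ℕ) : ℝ) := by push_cast; linarith [Nat.cast_nonneg (α := ℝ) a.natAbs]

lemma bnd_pow_mul (a : ℤ) (s : ℕ) : ∀ {p : LaurentPolynomial ℂ} {D : ℕ}, Bnd p D →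
    Bnd ((T a - 1)^s * p) ((fun D => 2*D + a.natAbs)^[s] D) := by
  induction s with
  | zero => intro p D h; simpa using h
  | succ s ih =>
    intro p D h
    rw [Function.iterate_succ_apply]
    have h1 : ((T a - 1)^(s+1) * p : LaurentPolynomial ℂ) = (T a - 1)^s * ((T a - 1) * p) := by
      ring
    rw [h1]
    exact ih (bnd_Tsub_mul a h)

lemma bnd_of_pow_dvd {n : ℤ} (hn : 1 ≤ n) (s : ℕ) : ∀ {q : LaurentPolynomial ℂ} {D : ℕ},
    Bnd ((T n - 1)^s * q) D → Bnd q ((fun D => (2*D+1)*D)^[s] D) := by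
  induction s with
  | zero => intro q D h; simpa using h
  | succ s ih =>
    intro q D h
    rw [Function.iterate_succ_apply']
    have h1 : ((T n - 1)^(s+1) * q : LaurentPolynomial ℂ) = (T n - 1)^s * ((T n - 1) * q) := by
      ring
    rw [h1] at h
    exact bnd_of_dvd hn rfl (ih h)

def PB (f : ℕ+ → ℕ) : Prop := ∃ K k : ℕ, ∀ N : ℕ+, f N ≤ K * (N:ℕ)^k

lemma pb_const (c : ℕ) : PB (fun _ => c) := ⟨c, 0, fun N => by simp⟩

lemma pb_coe : PB (fun N => (N:ℕ)) := ⟨1, 1, fun N => by simp⟩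

lemma pb_mono {f g : ℕ+ → ℕ} (h : ∀ N, f N ≤ g N) (hg : PB g) : PB f := by
  obtain ⟨K, k, hK⟩ := hg
  exact ⟨K, k, fun N => le_trans (h N) (hK N)⟩

lemma pb_add {f g : ℕ+ → ℕ} (hf : PB f) (hg : PB g) : PB (fun N => f N + g N) := by
  obtain ⟨K1, k1, h1⟩ := hf
  obtain ⟨K2, k2, h2⟩ := hg
  refine ⟨K1 + K2, max k1 k2, fun N => ?_⟩
  have e1 : (N:ℕ)^k1 ≤ (N:ℕ)^(max k1 k2) := Nat.pow_le_pow_right N.pos (le_max_left _ _)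
  have e2 : (N:ℕ)^k2 ≤ (N:ℕ)^(max k1 k2) := Nat.pow_le_pow_right N.pos (le_max_right _ _)
  calc f N + g N ≤ K1 * (N:ℕ)^k1 + K2 * (N:ℕ)^k2 := Nat.add_le_add (h1 N) (h2 N)
    _ ≤ K1 * (N:ℕ)^(max k1 k2) + K2 * (N:ℕ)^(max k1 k2) :=
        Nat.add_le_add (Nat.mul_le_mul_left _ e1) (Nat.mul_le_mul_left _ e2)
    _ = (K1 + K2) * (N:ℕ)^(max k1 k2) := by ring

lemma pb_mul {f g : ℕ+ → ℕ} (hf : PB f) (hg : PB g) : PB (fun N => f N * g N) := by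
  obtain ⟨K1, k1, h1⟩ := hf
  obtain ⟨K2, k2, h2⟩ := hg
  refine ⟨K1 * K2, k1 + k2, fun N => ?_⟩
  calc f N * g N ≤ (K1 * (N:ℕ)^k1) * (K2 * (N:ℕ)^k2) := Nat.mul_le_mul (h1 N) (h2 N)
    _ = K1 * K2 * (N:ℕ)^(k1+k2) := by rw [pow_add]; ring

lemma pb_iter1 (s : ℕ) {f : ℕ+ → ℕ} (hf : PB f) :
    PB (fun N => (fun D => 2*D + 4)^[s] (f N)) := by
  induction s generalizing f with
  | zero => simpa
  | succ s ih =>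
    simp only [Function.iterate_succ_apply]
    exact ih (pb_add (pb_mul (pb_const 2) hf) (pb_const 4))

lemma pb_iter2 (s : ℕ) {f : ℕ+ → ℕ} (hf : PB f) :
    PB (fun N => (fun D => (2*D + 1)*D)^[s] (f N)) := by
  induction s generalizing f with
  | zero => simpa
  | succ s ih =>
    simp only [Function.iterate_succ_apply]
    exact ih (pb_mul (pb_add (pb_mul (pb_const 2) hf) (pb_const 1)) hf)

lemma pnat_tendsto : Filter.Tendsto (fun N : ℕ+ => ((N:ℕ):ℝ)) Filter.atTop Filter.atTop := by
  apply tendsto_natCast_atTop_atTop.comp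
  apply Filter.tendsto_atTop_atTop.mpr
  intro b
  exact ⟨⟨b+1, Nat.succ_pos b⟩, fun a ha => le_trans (Nat.le_succ b) (by exact_mod_cast ha)⟩

lemma tendsto_aux (K k : ℕ) (g : ℕ+ → ℝ) (hg : ∀ N, 0 ≤ g N)
    (hb : ∀ N : ℕ+, g N ≤ (K : ℝ) * ((N:ℕ):ℝ)^k) :
    Filter.Tendsto (fun N : ℕ+ => (2 * Real.pi / ((N:ℕ):ℝ)) * Real.log (max 1 (g N)))
      Filter.atTop (nhds 0) := by
  have hv : Filter.Tendsto
      (fun x : ℝ => (2*Real.pi*Real.log (K+1))/x + (2*Real.pi*k) * (Real.log x / x))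
      Filter.atTop (nhds 0) := by
    have h1 : Filter.Tendsto (fun x : ℝ => (2*Real.pi*Real.log (K+1))/x)
        Filter.atTop (nhds 0) := Filter.Tendsto.div_atTop tendsto_const_nhds Filter.tendsto_id
    have h2 : Filter.Tendsto (fun x : ℝ => Real.log x / x) Filter.atTop (nhds 0) :=
      Real.isLittleO_log_id_atTop.tendsto_div_nhds_zero
    have := h1.add (h2.const_mul (2*Real.pi*k))
    simpa using this
  have hu : Filter.Tendsto
      (fun N : ℕ+ => (2*Real.pi*Real.log (K+1))/((N:ℕ):ℝ)
        + (2*Real.pi*k) * (Real.log ((N:ℕ):ℝ) / ((N:ℕ):ℝ)))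
      Filter.atTop (nhds 0) := hv.comp pnat_tendsto
  apply tendsto_of_tendsto_of_tendsto_of_le_of_le tendsto_const_nhds hu
  · intro N
    apply mul_nonneg
    · positivity
    · exact Real.log_nonneg (le_max_left _ _)
  · intro N
    have hN1 : (1:ℝ) ≤ ((N:ℕ):ℝ) := by exact_mod_cast N.pos
    have hKk : max 1 (g N) ≤ ((K:ℝ)+1) * ((N:ℕ):ℝ)^k := by
      have hpow : (1:ℝ) ≤ ((N:ℕ):ℝ)^k := by calc (1:ℝ) = 1^k := (one_pow k).symm
        _ ≤ ((N:ℕ):ℝ)^k := pow_le_pow_left₀ (by norm_num) hN1 k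
      apply max_le
      · nlinarith
      · nlinarith [hb N, pow_nonneg (le_trans zero_le_one hN1) k]
    have hlog : Real.log (max 1 (g N)) ≤ Real.log (((K:ℝ)+1) * ((N:ℕ):ℝ)^k) :=
      Real.log_le_log (lt_of_lt_of_le zero_lt_one (le_max_left _ _)) hKk
    have hsplit : Real.log (((K:ℝ)+1) * ((N:ℕ):ℝ)^k)
        = Real.log ((K:ℝ)+1) + k * Real.log ((N:ℕ):ℝ) := by
      rw [Real.log_mul (by positivity) (by positivity), Real.log_pow]
    have hstep : (2 * Real.pi / ((N:ℕ):ℝ)) * Real.log (max 1 (g N))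
        ≤ (2 * Real.pi / ((N:ℕ):ℝ)) * (Real.log ((K:ℝ)+1) + k * Real.log ((N:ℕ):ℝ)) := by
      rw [← hsplit]
      apply mul_le_mul_of_nonneg_left hlog (by positivity)
    refine le_trans hstep (le_of_eq ?_)
    field_simp


end MNZG

/-- Let `P` be a moderate multi-sequence indexed by `c`-tuples, and
suppose `[N]^s` divides `P_{(N,…,N)}` in `ℂ[A,A⁻¹]`, with quotient `Q_N`.  Then
`(2π/N)·log max(1, |Q_N(e^{iπ/2N})|) → 0` as `N → ∞`: the normalized values have zero
exponential growth rate. -/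
theorem moderate_normalized_zero_growth
    (c : ℕ) (hc : 1 ≤ c) (s : ℕ)
    (P : (Fin c → ℕ+) → LaurentPolynomial ℂ) (hP : Moderate P)
    (Q : ℕ+ → LaurentPolynomial ℂ)
    (hQ : ∀ N : ℕ+, P (fun _ => N) = qint N ^ s * Q N) :
    Filter.Tendsto
      (fun N : ℕ+ => (2 * Real.pi / ((N : ℕ) : ℝ)) *
        Real.log (max 1
          ‖evalL (Q N) (Complex.exp (Real.pi * Complex.I / (2 * ((N : ℕ) : ℂ))))‖))
      Filter.atTop (nhds 0) := by
  classical
  obtain ⟨C, m, hC, hm, hmod⟩ := hP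
  set D0 : ℕ+ → ℕ := fun N => ⌈C * ((c:ℝ) * ((N:ℕ):ℝ))^m⌉₊ with hD0def
  have hbnd0 : ∀ N : ℕ+, MNZG.Bnd (P (fun _ => N)) (D0 N) := by
    intro N
    have hsum : (∑ _k : Fin c, (((N:ℕ)):ℝ)) = (c:ℝ) * ((N:ℕ):ℝ) := by
      rw [Finset.sum_const, Finset.card_univ, Fintype.card_fin, nsmul_eq_mul]
    obtain ⟨hdeg, hcoef⟩ := hmod (fun _ => N)
    constructor
    · intro j hj
      have h1 := hdeg j hj
      rw [hsum] at h1
      have h2 : |(j:ℝ)| ≤ ((D0 N : ℕ) : ℝ) := le_trans h1.le (Nat.le_ceil _)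
      rw [← Int.cast_abs] at h2
      exact_mod_cast h2
    · intro j
      have h1 := hcoef j
      rw [hsum] at h1
      exact le_trans h1.le (Nat.le_ceil _)
  set g1 : ℕ → ℕ := fun D => 2*D + 4 with hg1def
  set g2 : ℕ → ℕ := fun D => (2*D + 1)*D with hg2def
  set D2 : ℕ+ → ℕ :=
    fun N => g2^[s] (g1^[s] (D0 N) + ((s:ℤ) * (2*((N:ℕ):ℤ) - 2)).natAbs) with hD2def
  have hbndQ : ∀ N : ℕ+, MNZG.Bnd (Q N) (D2 N) := by
    intro N
    have e4 : (4:ℤ).natAbs = 4 := rfl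
    have h1 : MNZG.Bnd ((T 4 - 1)^s * P (fun _ => N)) (g1^[s] (D0 N)) := by
      have := MNZG.bnd_pow_mul (4:ℤ) s (hbnd0 N)
      rw [e4] at this
      exact this
    have h2 := MNZG.bnd_T_mul ((s:ℤ) * (2*((N:ℕ):ℤ) - 2)) h1
    have hps : ((T 4 - 1)^s * qint N ^ s : LaurentPolynomial ℂ)
        = T ((s:ℕ) * (2 - 2*((N:ℕ):ℤ))) * (T (4*((N:ℕ):ℤ)) - 1)^s := by
      rw [← mul_pow, MNZG.key_identity, mul_pow, T_pow]
    have hkey : T ((s:ℤ) * (2*((N:ℕ):ℤ) - 2)) * ((T 4 - 1)^s * P (fun _ => N))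
        = (T (4*((N:ℕ):ℤ)) - 1)^s * Q N := by
      rw [hQ N]
      calc T ((s:ℤ) * (2*((N:ℕ):ℤ) - 2)) * ((T 4 - 1)^s * (qint N ^ s * Q N))
          = ((T 4 - 1)^s * qint N ^ s) * (T ((s:ℤ) * (2*((N:ℕ):ℤ) - 2)) * Q N) := by ring
        _ = (T ((s:ℕ) * (2 - 2*((N:ℕ):ℤ))) * (T (4*((N:ℕ):ℤ)) - 1)^s)
              * (T ((s:ℤ) * (2*((N:ℕ):ℤ) - 2)) * Q N) := by rw [hps]
        _ = (T ((s:ℤ) * (2*((N:ℕ):ℤ) - 2)) * T ((s:ℕ) * (2 - 2*((N:ℕ):ℤ))))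
              * ((T (4*((N:ℕ):ℤ)) - 1)^s * Q N) := by ring
        _ = T ((s:ℤ) * (2*((N:ℕ):ℤ) - 2) + (s:ℕ) * (2 - 2*((N:ℕ):ℤ)))
              * ((T (4*((N:ℕ):ℤ)) - 1)^s * Q N) := by rw [T_add]
        _ = (T (4*((N:ℕ):ℤ)) - 1)^s * Q N := by
              rw [show ((s:ℤ) * (2*((N:ℕ):ℤ) - 2) + (s:ℕ) * (2 - 2*((N:ℕ):ℤ)) : ℤ) = 0 by
                push_cast; ring, T_zero, one_mul]
    rw [hkey] at h2
    have hn : (1:ℤ) ≤ 4*((N:ℕ):ℤ) := by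
      have : (1:ℤ) ≤ ((N:ℕ):ℤ) := by exact_mod_cast N.pos
      linarith
    exact MNZG.bnd_of_pow_dvd hn s h2
  have hpbD2 : MNZG.PB D2 := by
    apply MNZG.pb_iter2
    apply MNZG.pb_add
    · apply MNZG.pb_iter1
      have hb : ∀ N : ℕ+, D0 N ≤ ⌈C * (c:ℝ)^m⌉₊ * (N:ℕ)^(⌈m⌉₊) := by
        intro N
        have hN1 : (1:ℝ) ≤ ((N:ℕ):ℝ) := by exact_mod_cast N.pos
        have hc0 : (0:ℝ) ≤ (c:ℝ) := Nat.cast_nonneg c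
        have hN0 : (0:ℝ) ≤ ((N:ℕ):ℝ) := le_trans zero_le_one hN1
        have e1 : C * ((c:ℝ) * ((N:ℕ):ℝ))^m = C * (c:ℝ)^m * ((N:ℕ):ℝ)^m := by
          rw [Real.mul_rpow hc0 hN0]; ring
        have e2 : ((N:ℕ):ℝ)^m ≤ ((N:ℕ):ℝ)^((⌈m⌉₊ : ℕ):ℝ) :=
          Real.rpow_le_rpow_of_exponent_le hN1 (Nat.le_ceil m)
        have e3 : ((N:ℕ):ℝ)^((⌈m⌉₊ : ℕ):ℝ) = ((N:ℕ):ℝ)^(⌈m⌉₊ : ℕ) := Real.rpow_natCast _ _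
        have e5 : (0:ℝ) ≤ C * (c:ℝ)^m := le_of_lt (by positivity)
        have e6 : C * ((c:ℝ) * ((N:ℕ):ℝ))^m ≤ (C * (c:ℝ)^m) * ((N:ℕ):ℝ)^(⌈m⌉₊ : ℕ) := by
          rw [e1, ← e3]
          exact mul_le_mul_of_nonneg_left e2 e5
        apply Nat.ceil_le.mpr
        refine le_trans e6 ?_
        have e7 : (C * (c:ℝ)^m) ≤ ((⌈C * (c:ℝ)^m⌉₊ : ℕ) : ℝ) := Nat.le_ceil _
        push_cast
        exact mul_le_mul_of_nonneg_right e7 (by positivity)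
      exact MNZG.pb_mono hb ⟨⌈C * (c:ℝ)^m⌉₊, ⌈m⌉₊, fun N => le_refl _⟩
    · apply MNZG.pb_mono (g := fun N => s * (2 * (N:ℕ)))
      · intro N
        rw [Int.natAbs_mul]
        have e1 : ((s:ℤ)).natAbs = s := Int.natAbs_natCast s
        rw [e1]
        apply Nat.mul_le_mul_left
        have := N.pos
        omega
      · exact MNZG.pb_mul (MNZG.pb_const s) (MNZG.pb_mul (MNZG.pb_const 2) MNZG.pb_coe)
  obtain ⟨K, k, hKk⟩ := MNZG.pb_mul (MNZG.pb_add (MNZG.pb_mul (MNZG.pb_const 2) hpbD2)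
    (MNZG.pb_const 1)) hpbD2
  apply MNZG.tendsto_aux K k
  · intro N
    exact norm_nonneg _
  · intro N
    have hz : ‖Complex.exp (Real.pi * Complex.I / (2 * ((N : ℕ) : ℂ)))‖ = 1 := by
      rw [show (Real.pi : ℂ) * Complex.I / (2 * ((N:ℕ):ℂ))
          = ((Real.pi / (2*(N:ℕ)) : ℝ) : ℂ) * Complex.I by push_cast; ring]
      exact Complex.norm_exp_ofReal_mul_I _
    have heval := (hbndQ N).eval_abs_le hz
    refine le_trans heval ?_
    have := hKk N
    calc (((2 * D2 N + 1) * D2 N : ℕ) : ℝ) ≤ ((K * (N:ℕ)^k : ℕ) : ℝ) := by exact_mod_cast this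
      _ = (K:ℝ) * ((N:ℕ):ℝ)^k := by push_cast; ring
end
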